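/- For any set Z equipped with a well order, the order ≤_PD is a well order on the free Ω-operated semigroup 𝔖(Z). -/

import Mathlib

/-! # Common setup: free Ω-operated semigroups/monoids (Ω = {D,P}),
degrees, orders, Gröbner–Shirshov machinery. -/

set_option maxHeartbeats 1000000

noncomputable section

universe u v w

/-! ## The free Ω-operated semigroup 𝔖(Z) -/

mutual
/-- Atoms: letters of `Z`, or bracketed words `⌊u⌋_D`, `⌊u⌋_P`. -/
inductive OpAtom (Z : Type u) : Type u
  | letter : Z → OpAtom Z
  | brD : OpWord Z → OpAtom Z
  | brP : OpWord Z → OpAtom Z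
/-- Elements of the free Ω-operated semigroup 𝔖(Z): nonempty words in atoms. -/
inductive OpWord (Z : Type u) : Type u
  | single : OpAtom Z → OpWord Z
  | cons : OpAtom Z → OpWord Z → OpWord Z
end

namespace OpWord

def mul {Z : Type u} : OpWord Z → OpWord Z → OpWord Z
  | .single a, w => .cons a w
  | .cons a u, w => .cons a (mul u w)

instance {Z : Type u} : Mul (OpWord Z) := ⟨mul⟩

theorem mul_assoc' {Z : Type u} : ∀ u v w : OpWord Z, (u * v) * w = u * (v * w)
  | .single _, _, _ => rfl
  | .cons a u, v, w => congrArg (OpWord.cons a) (mul_assoc' u v w)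

instance {Z : Type u} : Semigroup (OpWord Z) := { mul_assoc := mul_assoc' }

/-- The operator `u ↦ ⌊u⌋_D` on 𝔖(Z). -/
def opD {Z : Type u} (u : OpWord Z) : OpWord Z := .single (.brD u)
/-- The operator `u ↦ ⌊u⌋_P` on 𝔖(Z). -/
def opP {Z : Type u} (u : OpWord Z) : OpWord Z := .single (.brP u)
/-- The letter `z` as a word. -/
def ofL {Z : Type u} (z : Z) : OpWord Z := .single (.letter z)

end OpWord

/-! ## Degrees -/

mutual
  /-- number of occurrences of `⌊·⌋_D` -/
  def atomDegD {Z : Type u} : OpAtom Z → ℕ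
    | .letter _ => 0
    | .brD w => wordDegD w + 1
    | .brP w => wordDegD w
  def wordDegD {Z : Type u} : OpWord Z → ℕ
    | .single a => atomDegD a
    | .cons a w => atomDegD a + wordDegD w
end

mutual
  /-- number of occurrences of `⌊·⌋_P` -/
  def atomDegP {Z : Type u} : OpAtom Z → ℕ
    | .letter _ => 0
    | .brD w => wordDegP w
    | .brP w => wordDegP w + 1
  def wordDegP {Z : Type u} : OpWord Z → ℕ
    | .single a => atomDegP a
    | .cons a w => atomDegP a + wordDegP w
end

mutual
  /-- number of occurrences of letters of `Z`, with multiplicity -/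
  def atomDegZ {Z : Type u} : OpAtom Z → ℕ
    | .letter _ => 1
    | .brD w => wordDegZ w
    | .brP w => wordDegZ w
  def wordDegZ {Z : Type u} : OpWord Z → ℕ
    | .single a => atomDegZ a
    | .cons a w => atomDegZ a + wordDegZ w
end

mutual
  /-- The GD-degree: each right half bracket `⌋_D` contributes the number of
  `Z`-letters strictly to its right. -/
  def atomDegGD {Z : Type u} : OpAtom Z → ℕ
    | .letter _ => 0
    | .brD w => wordDegGD w
    | .brP w => wordDegGD w
  def wordDegGD {Z : Type u} : OpWord Z → ℕ
    | .single a => atomDegGD a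
    | .cons a w => atomDegGD a + wordDegGD w + atomDegD a * wordDegZ w
end

mutual
  /-- The GP-degree: each bracket `⌊·⌋_P` enclosing `i` of the `n` `Z`-letters
  contributes `n - i`, i.e. the number of `Z`-letters it does not enclose. -/
  def atomDegGP {Z : Type u} : OpAtom Z → ℕ
    | .letter _ => 0
    | .brD w => wordDegGP w
    | .brP w => wordDegGP w
  def wordDegGP {Z : Type u} : OpWord Z → ℕ
    | .single a => atomDegGP a
    | .cons a w => atomDegGP a + wordDegGP w + atomDegP a * wordDegZ w + wordDegP w * atomDegZ a
end

/-- The breadth: number of top-level atoms. -/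
def OpWord.breadth {Z : Type u} : OpWord Z → ℕ
  | .single _ => 1
  | .cons _ w => 1 + breadth w

/-! ## The order ≤_Dlex -/

mutual
  /-- order on atoms: letters < D-brackets < P-brackets, letters compared via the
  order of `Z`, brackets via the (recursive) order `Dlex` of the enclosed words. -/
  def atomDlexLt {Z : Type u} [LT Z] : OpAtom Z → OpAtom Z → Prop
    | .letter a, .letter b => a < b
    | .letter _, .brD _ => True
    | .letter _, .brP _ => True
    | .brD _, .letter _ => False
    | .brD u, .brD v =>
        OpWord.breadth u < OpWord.breadth v ∨
          (OpWord.breadth u = OpWord.breadth v ∧ wordLexLt u v)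
    | .brD _, .brP _ => True
    | .brP _, .letter _ => False
    | .brP _, .brD _ => False
    | .brP u, .brP v =>
        OpWord.breadth u < OpWord.breadth v ∨
          (OpWord.breadth u = OpWord.breadth v ∧ wordLexLt u v)
  /-- pure lexicographic comparison of the atom sequences (used for words of equal breadth) -/
  def wordLexLt {Z : Type u} [LT Z] : OpWord Z → OpWord Z → Prop
    | .single a, .single b => atomDlexLt a b
    | .single a, .cons b _ => atomDlexLt a b
    | .cons a _, .single b => atomDlexLt a b
    | .cons a u, .cons b v => atomDlexLt a b ∨ (a = b ∧ wordLexLt u v)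
end

/-- The strict degree-lexicographic order `<_Dlex` on 𝔖(Z): first by breadth, then
lexicographically. -/
def dlexLt {Z : Type u} [LT Z] (u v : OpWord Z) : Prop :=
  OpWord.breadth u < OpWord.breadth v ∨
    (OpWord.breadth u = OpWord.breadth v ∧ wordLexLt u v)

/-! ## The order ≤_PD -/

/-- The strict order `<_PD`: lexicographic combination of the comparisons of
`deg_D`, `deg_P`, `deg_Z`, `deg_GD`, `deg_GP` and finally `<_Dlex`. -/
def pdLt {Z : Type u} [LT Z] (u v : OpWord Z) : Prop :=
  wordDegD u < wordDegD v ∨ (wordDegD u = wordDegD v ∧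
  (wordDegP u < wordDegP v ∨ (wordDegP u = wordDegP v ∧
  (wordDegZ u < wordDegZ v ∨ (wordDegZ u = wordDegZ v ∧
  (wordDegGD u < wordDegGD v ∨ (wordDegGD u = wordDegGD v ∧
  (wordDegGP u < wordDegGP v ∨ (wordDegGP u = wordDegGP v ∧
  dlexLt u v)))))))))

/-- The order `≤_PD` on 𝔖(Z). -/
def pdLe {Z : Type u} [LT Z] (u v : OpWord Z) : Prop :=
  pdLt u v ∨ u = v

/-! ## Generic order-theoretic predicates -/

/-- `le` is a pre-linear order (reflexive, transitive, total preorder) satisfying the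
descending chain condition: any descending chain is eventually order-equivalent. -/
def IsPrelinearDCC {X : Type u} (le : X → X → Prop) : Prop :=
  (∀ x, le x x) ∧
  (∀ x y z, le x y → le y z → le x z) ∧
  (∀ x y, le x y ∨ le y x) ∧
  (∀ f : ℕ → X, (∀ n, le (f (n + 1)) (f n)) →
    ∃ N, ∀ n, N ≤ n → le (f n) (f (n + 1)) ∧ le (f (n + 1)) (f n))

/-- `le` is a linear order: reflexive, transitive, antisymmetric and total. -/
def IsLinOrderRel {X : Type u} (le : X → X → Prop) : Prop :=
  (∀ x, le x x) ∧
  (∀ x y z, le x y → le y z → le x z) ∧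
  (∀ x y, le x y → le y x → x = y) ∧
  (∀ x y, le x y ∨ le y x)

/-- `le` is a well order: a linear order in which every descending chain stabilizes. -/
def IsLinWellOrder {X : Type u} (le : X → X → Prop) : Prop :=
  IsLinOrderRel le ∧
  ∀ f : ℕ → X, (∀ n, le (f (n + 1)) (f n)) → ∃ N, ∀ n, N ≤ n → f n = f N

/-- the strict relation associated to `le`. -/
def ltOf {X : Type u} (le : X → X → Prop) (a b : X) : Prop := le a b ∧ a ≠ b

/-! ## Contexts (elements of 𝔖⋆(Z)) and substitution -/

mutual
  /-- number of occurrences of the star `⋆` (the letter `none`). -/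
  def atomSCount {Z : Type u} : OpAtom (Option Z) → ℕ
    | .letter none => 1
    | .letter (some _) => 0
    | .brD w => wordSCount w
    | .brP w => wordSCount w
  def wordSCount {Z : Type u} : OpWord (Option Z) → ℕ
    | .single a => atomSCount a
    | .cons a w => atomSCount a + wordSCount w
end

mutual
  /-- evaluation of a word over the alphabet `X` under an assignment `σ : X → 𝔖(Z)`. -/
  def atomSEval {X : Type v} {Z : Type u} (σ : X → OpWord Z) : OpAtom X → OpWord Z
    | .letter x => σ x
    | .brD w => OpWord.opD (wordSEval σ w)
    | .brP w => OpWord.opP (wordSEval σ w)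
  def wordSEval {X : Type v} {Z : Type u} (σ : X → OpWord Z) : OpWord X → OpWord Z
    | .single a => atomSEval σ a
    | .cons a w => OpWord.mul (atomSEval σ a) (wordSEval σ w)
end

/-- `substS q u` is `q|_u` : replace the star `⋆` in `q` by `u`. -/
def substS {Z : Type u} (q : OpWord (Option Z)) (u : OpWord Z) : OpWord Z :=
  wordSEval (fun oz => match oz with | some z => OpWord.ofL z | none => u) q

mutual
  /-- number of occurrences of the letter `x`. -/
  def atomLCount {X : Type v} [DecidableEq X] (x : X) : OpAtom X → ℕ
    | .letter y => if y = x then 1 else 0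
    | .brD w => wordLCount x w
    | .brP w => wordLCount x w
  def wordLCount {X : Type v} [DecidableEq X] (x : X) : OpWord X → ℕ
    | .single a => atomLCount x a
    | .cons a w => atomLCount x a + wordLCount x w
end

/-- words with no occurrence of a bracket (elements of the free semigroup S(Z) ⊆ 𝔖(Z)). -/
def atomPlain {Z : Type u} : OpAtom Z → Prop
  | .letter _ => True
  | .brD _ => False
  | .brP _ => False

def wordPlain {Z : Type u} : OpWord Z → Prop
  | .single a => atomPlain a
  | .cons a w => atomPlain a ∧ wordPlain w

mutual
  /-- functorial relabelling of letters. -/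
  def atomMap {Z : Type u} {W : Type v} (f : Z → W) : OpAtom Z → OpAtom W
    | .letter z => .letter (f z)
    | .brD w => .brD (wordMap f w)
    | .brP w => .brP (wordMap f w)
  def wordMap {Z : Type u} {W : Type v} (f : Z → W) : OpWord Z → OpWord W
    | .single a => .single (atomMap f a)
    | .cons a w => .cons (atomMap f a) (wordMap f w)
end
/-! ## The free Ω-operated monoid 𝔐(Z) = 𝔖(Z′) ⊔ {1}, Z′ = Z ⊔ {†_P, †_D} -/

/-- The extended alphabet `Z′ = Z ⊔ {†_P, †_D}`, where `†_P = ⌊1⌋_P`, `†_D = ⌊1⌋_D`;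
ordered by `†_D < z < †_P`. -/
inductive UL (Z : Type u) : Type u
  | dagD : UL Z
  | ofZ : Z → UL Z
  | dagP : UL Z

instance {Z : Type u} [LT Z] : LT (UL Z) :=
  ⟨fun a b =>
    match a, b with
    | .dagD, .dagD => False
    | .dagD, _ => True
    | .ofZ _, .dagD => False
    | .ofZ x, .ofZ y => x < y
    | .ofZ _, .dagP => True
    | .dagP, _ => False⟩

/-- The free Ω-operated monoid 𝔐(Z), realized as 𝔖(Z ⊔ {†_P, †_D}) ⊔ {1}. -/
inductive MWord (Z : Type u) : Type u
  | one : MWord Z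
  | ofW : OpWord (UL Z) → MWord Z

namespace MWord

def mul {Z : Type u} : MWord Z → MWord Z → MWord Z
  | .one, y => y
  | .ofW u, .one => .ofW u
  | .ofW u, .ofW v => .ofW (u * v)

instance {Z : Type u} : Mul (MWord Z) := ⟨mul⟩
instance {Z : Type u} : One (MWord Z) := ⟨MWord.one⟩

theorem mul_assoc' {Z : Type u} : ∀ a b c : MWord Z, a * b * c = a * (b * c)
  | .one, _, _ => rfl
  | .ofW _, .one, _ => rfl
  | .ofW _, .ofW _, .one => rfl
  | .ofW u, .ofW v, .ofW w => congrArg MWord.ofW (OpWord.mul_assoc' u v w)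

instance {Z : Type u} : Monoid (MWord Z) where
  mul_assoc := mul_assoc'
  one_mul _ := rfl
  mul_one a := by cases a <;> rfl

/-- The operator `u ↦ ⌊u⌋_D` on 𝔐(Z); `⌊1⌋_D = †_D`. -/
def opD {Z : Type u} : MWord Z → MWord Z
  | .one => .ofW (.single (.letter .dagD))
  | .ofW u => .ofW (.single (.brD u))

/-- The operator `u ↦ ⌊u⌋_P` on 𝔐(Z); `⌊1⌋_P = †_P`. -/
def opP {Z : Type u} : MWord Z → MWord Z
  | .one => .ofW (.single (.letter .dagP))
  | .ofW u => .ofW (.single (.brP u))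

/-- The letter `z` as an element of 𝔐(Z). -/
def ofL {Z : Type u} (z : Z) : MWord Z := .ofW (.single (.letter (.ofZ z)))

/-- The breadth, with `|1| = 0`. -/
def breadth {Z : Type u} : MWord Z → ℕ
  | .one => 0
  | .ofW u => OpWord.breadth u

end MWord

/-- plainness over the extended alphabet: atoms are genuine letters of `Z`. -/
def atomPlainM {Z : Type u} : OpAtom (UL Z) → Prop
  | .letter (.ofZ _) => True
  | _ => False

def wordPlainM {Z : Type u} : OpWord (UL Z) → Prop
  | .single a => atomPlainM a
  | .cons a w => atomPlainM a ∧ wordPlainM w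

/-- plain elements of 𝔐(Z): the image of the free monoid M(Z) ⊆ 𝔐(Z). -/
def MWord.isPlain {Z : Type u} : MWord Z → Prop
  | .one => True
  | .ofW u => wordPlainM u

/-! ## The order ≤_uPD -/

mutual
  /-- `deg_P` for the unital setting: `deg_P(†_P) = 1`. -/
  def atomUDegP {Z : Type u} : OpAtom (UL Z) → ℕ
    | .letter .dagP => 1
    | .letter _ => 0
    | .brD w => wordUDegP w
    | .brP w => wordUDegP w + 1
  def wordUDegP {Z : Type u} : OpWord (UL Z) → ℕ
    | .single a => atomUDegP a
    | .cons a w => atomUDegP a + wordUDegP w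
end

/-- The strict order `<_PD` on 𝔖(Z′), where `deg_P(†_P) = 1` and `deg_GP(†_P) = 0`. -/
def updLtW {Z : Type u} [LT Z] (u v : OpWord (UL Z)) : Prop :=
  wordDegD u < wordDegD v ∨ (wordDegD u = wordDegD v ∧
  (wordUDegP u < wordUDegP v ∨ (wordUDegP u = wordUDegP v ∧
  (wordDegZ u < wordDegZ v ∨ (wordDegZ u = wordDegZ v ∧
  (wordDegGD u < wordDegGD v ∨ (wordDegGD u = wordDegGD v ∧
  (wordDegGP u < wordDegGP v ∨ (wordDegGP u = wordDegGP v ∧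
  dlexLt u v)))))))))

/-- The order `≤_uPD` on 𝔐(Z) = 𝔖(Z′) ⊔ {1} : it restricts to `≤_PD` on 𝔖(Z′) and
`1` is the smallest element. -/
def updLe {Z : Type u} [LT Z] : MWord Z → MWord Z → Prop
  | .one, _ => True
  | .ofW _, .one => False
  | .ofW u, .ofW v => updLtW u v ∨ u = v

/-! ## Contexts in 𝔐⋆(Z), substitution and evaluation -/

mutual
  /-- number of occurrences of the star `⋆` (the letter `ofZ none`). -/
  def atomMSCount {Z : Type u} : OpAtom (UL (Option Z)) → ℕ
    | .letter (.ofZ none) => 1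
    | .letter _ => 0
    | .brD w => wordMSCount w
    | .brP w => wordMSCount w
  def wordMSCount {Z : Type u} : OpWord (UL (Option Z)) → ℕ
    | .single a => atomMSCount a
    | .cons a w => atomMSCount a + wordMSCount w
end

def MWord.mscount {Z : Type u} : MWord (Option Z) → ℕ
  | .one => 0
  | .ofW w => wordMSCount w

mutual
  /-- evaluation of a word over the alphabet `X` under `σ : X → 𝔐(Z)`. -/
  def atomMEval {X : Type v} {Z : Type u} (σ : X → MWord Z) : OpAtom (UL X) → MWord Z
    | .letter (.ofZ x) => σ x
    | .letter .dagP => MWord.opP 1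
    | .letter .dagD => MWord.opD 1
    | .brD w => MWord.opD (wordMEval σ w)
    | .brP w => MWord.opP (wordMEval σ w)
  def wordMEval {X : Type v} {Z : Type u} (σ : X → MWord Z) : OpWord (UL X) → MWord Z
    | .single a => atomMEval σ a
    | .cons a w => atomMEval σ a * wordMEval σ w
end

/-- evaluation on 𝔐(X). -/
def MWord.meval {X : Type v} {Z : Type u} (σ : X → MWord Z) : MWord X → MWord Z
  | .one => 1
  | .ofW w => wordMEval σ w

/-- `msubst q u` is `q|_u` : replace the star `⋆` in `q ∈ 𝔐(Z ∪ {⋆})` by `u ∈ 𝔐(Z)`. -/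
def MWord.msubst {Z : Type u} (q : MWord (Option Z)) (u : MWord Z) : MWord Z :=
  q.meval (fun oz => match oz with | some z => MWord.ofL z | none => u)

mutual
  /-- number of occurrences of the letter `x ∈ X` in a word over `X′`. -/
  def atomMLCount {X : Type v} [DecidableEq X] (x : X) : OpAtom (UL X) → ℕ
    | .letter (.ofZ y) => if y = x then 1 else 0
    | .letter _ => 0
    | .brD w => wordMLCount x w
    | .brP w => wordMLCount x w
  def wordMLCount {X : Type v} [DecidableEq X] (x : X) : OpWord (UL X) → ℕ
    | .single a => atomMLCount x a
    | .cons a w => atomMLCount x a + wordMLCount x w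
end

def MWord.mlcount {X : Type v} [DecidableEq X] (x : X) : MWord X → ℕ
  | .one => 0
  | .ofW w => wordMLCount x w
/-! ## Monomial orders -/

/-- A monomial order on 𝔖(Z): a well order such that `u < v` implies `q|_u < q|_v`
for every context `q ∈ 𝔖⋆(Z)`. -/
def IsMonomialOrderS {Z : Type u} (le : OpWord Z → OpWord Z → Prop) : Prop :=
  IsLinWellOrder le ∧
  ∀ q : OpWord (Option Z), wordSCount q = 1 →
    ∀ u v : OpWord Z, ltOf le u v → ltOf le (substS q u) (substS q v)

/-- A monomial order on 𝔐(Z). -/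
def IsMonomialOrderM {Z : Type u} (le : MWord Z → MWord Z → Prop) : Prop :=
  IsLinWellOrder le ∧
  ∀ q : MWord (Option Z), MWord.mscount q = 1 →
    ∀ u v : MWord Z, ltOf le u v → ltOf le (MWord.msubst q u) (MWord.msubst q v)

/-- bracket compatibility of a relation on 𝔖(Z). -/
def BracketCompat {Z : Type u} (le : OpWord Z → OpWord Z → Prop) : Prop :=
  ∀ u v, le u v → le (OpWord.opD u) (OpWord.opD v) ∧ le (OpWord.opP u) (OpWord.opP v)

/-- left compatibility of a relation on 𝔖(Z). -/
def LeftCompat {Z : Type u} (le : OpWord Z → OpWord Z → Prop) : Prop :=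
  ∀ u v, le u v → ∀ w, le (w * u) (w * v)

/-- right compatibility of a relation on 𝔖(Z). -/
def RightCompat {Z : Type u} (le : OpWord Z → OpWord Z → Prop) : Prop :=
  ∀ u v, le u v → ∀ w, le (u * w) (v * w)

/-! ## The free operated algebras k𝔖(Z) and k𝔐(Z) -/

/-- `k𝔖(Z)`: the free nonunital Ω-operated `k`-algebra on `Z`, with basis 𝔖(Z). -/
abbrev FreeOpAlgS (k : Type w) [Field k] (Z : Type u) := MonoidAlgebra k (OpWord Z)

/-- `k𝔐(Z)`: the free unital Ω-operated `k`-algebra on `Z`, with basis 𝔐(Z). -/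
abbrev FreeOpAlgM (k : Type w) [Field k] (Z : Type u) := MonoidAlgebra k (MWord Z)

variable {k : Type w} [Field k] {Z : Type u}

/-- the monomial `w` as an element of k𝔖(Z). -/
def monoS (w : OpWord Z) : FreeOpAlgS k Z := MonoidAlgebra.single w 1

/-- the monomial `w` as an element of k𝔐(Z). -/
def monoM (w : MWord Z) : FreeOpAlgM k Z := MonoidAlgebra.single w 1

/-- the linear extension of the operator `⌊·⌋_D` to k𝔖(Z). -/
def liftDS (f : FreeOpAlgS k Z) : FreeOpAlgS k Z := .ofCoeff (Finsupp.mapDomain OpWord.opD f.coeff)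
def liftPS (f : FreeOpAlgS k Z) : FreeOpAlgS k Z := .ofCoeff (Finsupp.mapDomain OpWord.opP f.coeff)
def liftDM (f : FreeOpAlgM k Z) : FreeOpAlgM k Z := .ofCoeff (Finsupp.mapDomain MWord.opD f.coeff)
def liftPM (f : FreeOpAlgM k Z) : FreeOpAlgM k Z := .ofCoeff (Finsupp.mapDomain MWord.opP f.coeff)

/-- `w` is the leading monomial of `f` with respect to `le`. -/
def IsLMS (le : OpWord Z → OpWord Z → Prop) (f : FreeOpAlgS k Z) (w : OpWord Z) : Prop :=
  w ∈ f.coeff.support ∧ ∀ u ∈ f.coeff.support, le u w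

def IsLMM (le : MWord Z → MWord Z → Prop) (f : FreeOpAlgM k Z) (w : MWord Z) : Prop :=
  w ∈ f.coeff.support ∧ ∀ u ∈ f.coeff.support, le u w

/-- `q|_f`: the linear extension of the context `q` applied to `f ∈ k𝔖(Z)`. -/
def ctxApplyS (q : OpWord (Option Z)) (f : FreeOpAlgS k Z) : FreeOpAlgS k Z :=
  MonoidAlgebra.ofCoeff (Finsupp.mapDomain (fun w => substS q w) f.coeff)

def ctxApplyM (q : MWord (Option Z)) (f : FreeOpAlgM k Z) : FreeOpAlgM k Z :=
  MonoidAlgebra.ofCoeff (Finsupp.mapDomain (fun w => MWord.msubst q w) f.coeff)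

/-! ## Ω-ideals -/

/-- the Ω-ideal of k𝔖(Z) generated by `S`: the smallest subspace containing `S`,
closed under left and right multiplication and under both operators. -/
def omegaIdealS (S : Set (FreeOpAlgS k Z)) : Submodule k (FreeOpAlgS k Z) :=
  sInf {N | S ⊆ ↑N ∧ (∀ a : FreeOpAlgS k Z, ∀ x ∈ N, a * x ∈ N) ∧
      (∀ a : FreeOpAlgS k Z, ∀ x ∈ N, x * a ∈ N) ∧
      (∀ x ∈ N, liftDS x ∈ N) ∧ (∀ x ∈ N, liftPS x ∈ N)}

def omegaIdealM (S : Set (FreeOpAlgM k Z)) : Submodule k (FreeOpAlgM k Z) :=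
  sInf {N | S ⊆ ↑N ∧ (∀ a : FreeOpAlgM k Z, ∀ x ∈ N, a * x ∈ N) ∧
      (∀ a : FreeOpAlgM k Z, ∀ x ∈ N, x * a ∈ N) ∧
      (∀ x ∈ N, liftDM x ∈ N) ∧ (∀ x ∈ N, liftPM x ∈ N)}

/-- the (operator-free, associative) ideal of the subalgebra kS(Z) ⊆ k𝔖(Z)
generated by `S`. -/
def plainIdealS (S : Set (FreeOpAlgS k Z)) : Submodule k (FreeOpAlgS k Z) :=
  sInf {N | S ⊆ ↑N ∧ (∀ w : OpWord Z, wordPlain w → ∀ x ∈ N,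
      (monoS (k := k) w) * x ∈ N ∧ x * (monoS (k := k) w) ∈ N)}

/-- the (operator-free, associative) ideal of the subalgebra kM(Z) ⊆ k𝔐(Z)
generated by `S`. -/
def plainIdealM (S : Set (FreeOpAlgM k Z)) : Submodule k (FreeOpAlgM k Z) :=
  sInf {N | S ⊆ ↑N ∧ (∀ w : MWord Z, MWord.isPlain w → ∀ x ∈ N,
      (monoM (k := k) w) * x ∈ N ∧ x * (monoM (k := k) w) ∈ N)}

/-! ## Compositions, triviality and Gröbner–Shirshov bases.

Both are parameterized by a predicate `C` on the allowed contexts (for the operated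
theory, `C q` says the star occurs exactly once; for the classical operator-free
theory on the free (semi)group one additionally requires contexts to be plain)
and a predicate `W` on the words `u, v` allowed in intersection compositions. -/

/-- `h` is trivial modulo `(G, p)`: it can be written as a linear combination
`Σ cᵢ qᵢ|_{sᵢ}` with `sᵢ ∈ G` and `qᵢ|_{lm(sᵢ)} < p`. -/
def TrivialModS (le : OpWord Z → OpWord Z → Prop) (G : Set (FreeOpAlgS k Z))
    (C : OpWord (Option Z) → Prop) (p : OpWord Z) (h : FreeOpAlgS k Z) : Prop :=
  ∃ (n : ℕ) (c : Fin n → k) (q : Fin n → OpWord (Option Z)) (s : Fin n → FreeOpAlgS k Z)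
    (m : Fin n → OpWord Z),
      (∀ i, C (q i)) ∧ (∀ i, s i ∈ G) ∧ (∀ i, IsLMS le (s i) (m i)) ∧
      (∀ i, ltOf le (substS (q i) (m i)) p) ∧
      h = ∑ i, c i • ctxApplyS (q i) (s i)

def TrivialModM (le : MWord Z → MWord Z → Prop) (G : Set (FreeOpAlgM k Z))
    (C : MWord (Option Z) → Prop) (p : MWord Z) (h : FreeOpAlgM k Z) : Prop :=
  ∃ (n : ℕ) (c : Fin n → k) (q : Fin n → MWord (Option Z)) (s : Fin n → FreeOpAlgM k Z)
    (m : Fin n → MWord Z),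
      (∀ i, C (q i)) ∧ (∀ i, s i ∈ G) ∧ (∀ i, IsLMM le (s i) (m i)) ∧
      (∀ i, ltOf le (MWord.msubst (q i) (m i)) p) ∧
      h = ∑ i, c i • ctxApplyM (q i) (s i)

/-- `G` is a Gröbner–Shirshov basis: all intersection compositions `fu - vg` and all
inclusion compositions `f - q|_g` of monicized pairs from `G` are trivial. -/
def IsGSBasisS (le : OpWord Z → OpWord Z → Prop) (G : Set (FreeOpAlgS k Z))
    (C : OpWord (Option Z) → Prop) (W : OpWord Z → Prop) : Prop :=
  ∀ f ∈ G, ∀ g ∈ G, ∀ wf wg, IsLMS le f wf → IsLMS le g wg →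
    (∀ u v p : OpWord Z, W u → W v → p = wf * u → p = v * wg →
      max (OpWord.breadth wf) (OpWord.breadth wg) < OpWord.breadth p →
      OpWord.breadth p < OpWord.breadth wf + OpWord.breadth wg →
      TrivialModS le G C p
        (((f.coeff wf)⁻¹ • f) * monoS u - monoS v * ((g.coeff wg)⁻¹ • g))) ∧
    (∀ (q : OpWord (Option Z)) (p : OpWord Z), C q → p = wf → p = substS q wg →
      TrivialModS le G C p ((f.coeff wf)⁻¹ • f - ctxApplyS q ((g.coeff wg)⁻¹ • g)))

def IsGSBasisM (le : MWord Z → MWord Z → Prop) (G : Set (FreeOpAlgM k Z))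
    (C : MWord (Option Z) → Prop) (W : MWord Z → Prop) : Prop :=
  ∀ f ∈ G, ∀ g ∈ G, ∀ wf wg, IsLMM le f wf → IsLMM le g wg →
    (∀ u v p : MWord Z, W u → W v → p = wf * u → p = v * wg →
      max (MWord.breadth wf) (MWord.breadth wg) < MWord.breadth p →
      MWord.breadth p < MWord.breadth wf + MWord.breadth wg →
      TrivialModM le G C p
        (((f.coeff wf)⁻¹ • f) * monoM u - monoM v * ((g.coeff wg)⁻¹ • g))) ∧
    (∀ (q : MWord (Option Z)) (p : MWord Z), C q → p = wf → p = MWord.msubst q wg →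
      TrivialModM le G C p ((f.coeff wf)⁻¹ • f - ctxApplyM q ((g.coeff wg)⁻¹ • g)))

/-- the context predicate of the operated theory: the star occurs exactly once. -/
def ctxAllS {Z : Type u} (q : OpWord (Option Z)) : Prop := wordSCount q = 1
def ctxAllM {Z : Type u} (q : MWord (Option Z)) : Prop := MWord.mscount q = 1

/-- the context predicate of the classical (operator-free) theory. -/
def ctxPlainS {Z : Type u} (q : OpWord (Option Z)) : Prop := wordSCount q = 1 ∧ wordPlain q
def ctxPlainM {Z : Type u} (q : MWord (Option Z)) : Prop := MWord.mscount q = 1 ∧ MWord.isPlain q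

/-! ## Irreducible monomials -/

/-- `Irr(G)`: monomials that are not of the form `q|_{lm(s)}` for `s ∈ G`. -/
def irrS (le : OpWord Z → OpWord Z → Prop) (G : Set (FreeOpAlgS k Z)) : Set (OpWord Z) :=
  {x | ¬ ∃ s ∈ G, ∃ q : OpWord (Option Z), wordSCount q = 1 ∧
        ∃ m, IsLMS le s m ∧ x = substS q m}

def irrM (le : MWord Z → MWord Z → Prop) (G : Set (FreeOpAlgM k Z)) : Set (MWord Z) :=
  {x | ¬ ∃ s ∈ G, ∃ q : MWord (Option Z), MWord.mscount q = 1 ∧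
        ∃ m, IsLMM le s m ∧ x = MWord.msubst q m}

/-! ## Operated polynomial identities -/

/-- substitution instance of an OPI `φ ∈ k𝔖(X)` under `σ : X → 𝔖(Z)`. -/
def opiSubstS {X : Type v} (σ : X → OpWord Z) (φ : FreeOpAlgS k X) : FreeOpAlgS k Z :=
  MonoidAlgebra.ofCoeff (Finsupp.mapDomain (wordSEval σ) φ.coeff)

/-- substitution instance of an OPI `φ ∈ k𝔐(X)` under `σ : X → 𝔐(Z)`. -/
def opiSubstM {X : Type v} (σ : X → MWord Z) (φ : FreeOpAlgM k X) : FreeOpAlgM k Z :=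
  MonoidAlgebra.ofCoeff (Finsupp.mapDomain (MWord.meval σ) φ.coeff)

/-- `S_Φ(𝔖(Z))`: all substitution instances of the OPIs of `Φ`. -/
def sPhiS {X : Type v} (Φ : Set (FreeOpAlgS k X)) (Z : Type u) : Set (FreeOpAlgS k Z) :=
  {f | ∃ φ ∈ Φ, ∃ σ : X → OpWord Z, f = opiSubstS σ φ}

def sPhiM {X : Type v} (Φ : Set (FreeOpAlgM k X)) (Z : Type u) : Set (FreeOpAlgM k Z) :=
  {f | ∃ φ ∈ Φ, ∃ σ : X → MWord Z, f = opiSubstM σ φ}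

/-- an OPI is multilinear if each variable occurring in it occurs exactly once in
every monomial of it. -/
def MultilinearS {X : Type v} [DecidableEq X] (φ : FreeOpAlgS k X) : Prop :=
  ∀ x : X, (∃ u ∈ φ.coeff.support, 1 ≤ wordLCount x u) →
    ∀ u ∈ φ.coeff.support, wordLCount x u = 1

def MultilinearM {X : Type v} [DecidableEq X] (φ : FreeOpAlgM k X) : Prop :=
  ∀ x : X, (∃ u ∈ φ.coeff.support, 1 ≤ MWord.mlcount x u) →
    ∀ u ∈ φ.coeff.support, MWord.mlcount x u = 1
/-! ## The OPIs for differential Rota–Baxter and integro-differential algebras.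

We write them directly as families of elements of k𝔖(Z), parameterized by the
words substituted for the variables. -/

open OpWord in
/-- `φ₁(u,v) = P(u)P(v) − P(uP(v)) − P(P(u)v) − λP(uv)`. -/
def phi1 (lam : k) (u v : OpWord Z) : FreeOpAlgS k Z :=
  monoS (opP u * opP v) - monoS (opP (u * opP v)) - monoS (opP (opP u * v))
    - lam • monoS (opP (u * v))

open OpWord in
/-- `φ₂(u,v) = D(u)D(v) + λ⁻¹D(u)v + λ⁻¹uD(v) − λ⁻¹D(uv)`. -/
def phi2 (lam : k) (u v : OpWord Z) : FreeOpAlgS k Z :=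
  monoS (opD u * opD v) + lam⁻¹ • monoS (opD u * v) + lam⁻¹ • monoS (u * opD v)
    - lam⁻¹ • monoS (opD (u * v))

open OpWord in
/-- `φ₃(u) = D(P(u)) − u`. -/
def phi3 (u : OpWord Z) : FreeOpAlgS k Z :=
  monoS (opD (opP u)) - monoS u

open OpWord in
/-- `φ₄(u,v) = P(u)D(v) − D(P(u)v) + uv + λuD(v)`. -/
def phi4 (lam : k) (u v : OpWord Z) : FreeOpAlgS k Z :=
  monoS (opP u * opD v) - monoS (opD (opP u * v)) + monoS (u * v)
    + lam • monoS (u * opD v)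

open OpWord in
/-- `φ₅(u,v) = D(u)P(v) − D(uP(v)) + uv + λD(u)v`. -/
def phi5 (lam : k) (u v : OpWord Z) : FreeOpAlgS k Z :=
  monoS (opD u * opP v) - monoS (opD (u * opP v)) + monoS (u * v)
    + lam • monoS (opD u * v)

open OpWord in
/-- `φ₆(u,v) = P(D(u)P(v)) − uP(v) + P(uv) + λP(D(u)v)`. -/
def phi6 (lam : k) (u v : OpWord Z) : FreeOpAlgS k Z :=
  monoS (opP (opD u * opP v)) - monoS (u * opP v) + monoS (opP (u * v))
    + lam • monoS (opP (opD u * v))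

open OpWord in
/-- `φ₇(u,v) = P(P(u)D(v)) − P(u)v + P(uv) + λP(uD(v))`. -/
def phi7 (lam : k) (u v : OpWord Z) : FreeOpAlgS k Z :=
  monoS (opP (opP u * opD v)) - monoS (opP u * v) + monoS (opP (u * v))
    + lam • monoS (opP (u * opD v))

open OpWord in
/-- `φ₈(u,v) = P(D(P(u)v)) − P(u)v`. -/
def phi8 (u v : OpWord Z) : FreeOpAlgS k Z :=
  monoS (opP (opD (opP u * v))) - monoS (opP u * v)

open OpWord in
/-- `φ₉(u,v) = P(D(uP(v))) − uP(v)`. -/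
def phi9 (u v : OpWord Z) : FreeOpAlgS k Z :=
  monoS (opP (opD (u * opP v))) - monoS (u * opP v)

open OpWord in
/-- `φ₁⁰(u,v) = P(u)P(v) − P(uP(v)) − P(P(u)v)` (weight 0). -/
def phi1z (u v : OpWord Z) : FreeOpAlgS k Z :=
  monoS (opP u * opP v) - monoS (opP (u * opP v)) - monoS (opP (opP u * v))

open OpWord in
/-- `φ₂⁰(u,v) = D(u)v + uD(v) − D(uv)` (weight 0). -/
def phi2z (u v : OpWord Z) : FreeOpAlgS k Z :=
  monoS (opD u * v) + monoS (u * opD v) - monoS (opD (u * v))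

open OpWord in
/-- `φ₄⁰(u,v) = P(u)D(v) − D(P(u)v) + uv` (weight 0). -/
def phi4z (u v : OpWord Z) : FreeOpAlgS k Z :=
  monoS (opP u * opD v) - monoS (opD (opP u * v)) + monoS (u * v)

/-- `S_{Φ_dRB}(𝔖(Z))` for `Φ_dRB = {φ₁,…,φ₅}` (λ ≠ 0). -/
def SdRB (lam : k) (Z : Type u) : Set (FreeOpAlgS k Z) :=
  {f | (∃ u v, f = phi1 lam u v) ∨ (∃ u v, f = phi2 lam u v) ∨ (∃ u, f = phi3 u) ∨
       (∃ u v, f = phi4 lam u v) ∨ (∃ u v, f = phi5 lam u v)}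

/-- `S_{Φ_0dRB}(𝔖(Z))` for `Φ_0dRB = {φ₁⁰, φ₂⁰, φ₃⁰, φ₄⁰}` (λ = 0). -/
def SdRBz (k : Type w) [Field k] (Z : Type u) : Set (FreeOpAlgS k Z) :=
  {f | (∃ u v, f = phi1z u v) ∨ (∃ u v, f = phi2z u v) ∨ (∃ u, f = phi3 (k := k) u) ∨
       (∃ u v, f = phi4z u v)}

/-- `S_{Φ'_ID}(𝔖(Z))` for `Φ'_ID = {φ₂, φ₃, φ₆, φ₇}` (λ ≠ 0). -/
def SIDp (lam : k) (Z : Type u) : Set (FreeOpAlgS k Z) :=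
  {f | (∃ u v, f = phi2 lam u v) ∨ (∃ u, f = phi3 u) ∨
       (∃ u v, f = phi6 lam u v) ∨ (∃ u v, f = phi7 lam u v)}

/-- `S_{Φ_ID}(𝔖(Z))` for `Φ_ID = {φ₁, φ₂, φ₃, φ₄, φ₅, φ₈, φ₉}` (λ ≠ 0). -/
def SID (lam : k) (Z : Type u) : Set (FreeOpAlgS k Z) :=
  {f | (∃ u v, f = phi1 lam u v) ∨ (∃ u v, f = phi2 lam u v) ∨ (∃ u, f = phi3 u) ∨
       (∃ u v, f = phi4 lam u v) ∨ (∃ u v, f = phi5 lam u v) ∨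
       (∃ u v, f = phi8 u v) ∨ (∃ u v, f = phi9 u v)}

/-! ## Miscellaneous helpers -/

/-- the lexicographic combination `≤_{α₁,…,α_k}` of a list of preorders:
`u ≤ v` iff `u <_{α₁} v`, or `u =_{α₁} v` and `u ≤_{α₂,…,α_k} v`. -/
def lexComb {X : Type u} : List (X → X → Prop) → X → X → Prop
  | [] => fun _ _ => True
  | [r] => r
  | r :: s :: rest => fun a b => (r a b ∧ ¬ r b a) ∨ (r a b ∧ r b a ∧ lexComb (s :: rest) a b)

/-- the subspace `kS(Z) ⊆ k𝔖(Z)` spanned by the plain monomials. -/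
def plainSpanS (k : Type w) [Field k] (Z : Type u) : Submodule k (FreeOpAlgS k Z) :=
  Submodule.span k ((fun x : OpWord Z => monoS (k := k) x) '' {x | wordPlain x})

end

set_option linter.unusedSectionVars false

section Ord
variable {Z : Type u} [LinearOrder Z]

lemma breadth_pos' (w : OpWord Z) : 1 ≤ OpWord.breadth w := by
  cases w <;> simp [OpWord.breadth]

mutual
theorem atomTrans : ∀ (a b c : OpAtom Z), atomDlexLt a b → atomDlexLt b c → atomDlexLt a c
  | .letter _, .letter _, .letter _, h1, h2 => by
      simp only [atomDlexLt] at *; exact h1.trans h2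
  | .letter _, _, .brD _, _, _ => by simp [atomDlexLt]
  | .letter _, _, .brP _, _, _ => by simp [atomDlexLt]
  | .brD _, _, .brP _, _, _ => by simp [atomDlexLt]
  | .letter _, .brD _, .letter _, _, h2 => by simp [atomDlexLt] at h2
  | .letter _, .brP _, .letter _, _, h2 => by simp [atomDlexLt] at h2
  | .brD _, .letter _, _, h1, _ => by simp [atomDlexLt] at h1
  | .brD _, .brD _, .letter _, _, h2 => by simp [atomDlexLt] at h2
  | .brD u, .brD v, .brD w, h1, h2 => by
      simp only [atomDlexLt] at *
      rcases h1 with h1 | ⟨e1, l1⟩ <;> rcases h2 with h2 | ⟨e2, l2⟩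
      · exact Or.inl (h1.trans h2)
      · exact Or.inl (e2 ▸ h1)
      · exact Or.inl (e1 ▸ h2)
      · exact Or.inr ⟨e1.trans e2, wordLexTrans u v w l1 l2⟩
  | .brD _, .brP _, .letter _, _, h2 => by simp [atomDlexLt] at h2
  | .brD _, .brP _, .brD _, _, h2 => by simp [atomDlexLt] at h2
  | .brP _, .letter _, _, h1, _ => by simp [atomDlexLt] at h1
  | .brP _, .brD _, _, h1, _ => by simp [atomDlexLt] at h1
  | .brP _, .brP _, .letter _, _, h2 => by simp [atomDlexLt] at h2
  | .brP _, .brP _, .brD _, _, h2 => by simp [atomDlexLt] at h2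
  | .brP u, .brP v, .brP w, h1, h2 => by
      simp only [atomDlexLt] at *
      rcases h1 with h1 | ⟨e1, l1⟩ <;> rcases h2 with h2 | ⟨e2, l2⟩
      · exact Or.inl (h1.trans h2)
      · exact Or.inl (e2 ▸ h1)
      · exact Or.inl (e1 ▸ h2)
      · exact Or.inr ⟨e1.trans e2, wordLexTrans u v w l1 l2⟩

theorem wordLexTrans : ∀ (u v w : OpWord Z), wordLexLt u v → wordLexLt v w → wordLexLt u w
  | .single a, .single b, .single c, h1, h2 => by
      simp only [wordLexLt] at *; exact atomTrans a b c h1 h2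
  | .single a, .single b, .cons c _, h1, h2 => by
      simp only [wordLexLt] at *; exact atomTrans a b c h1 h2
  | .single a, .cons b _, .single c, h1, h2 => by
      simp only [wordLexLt] at *; exact atomTrans a b c h1 h2
  | .single a, .cons b _, .cons c _, h1, h2 => by
      simp only [wordLexLt] at *
      rcases h2 with h2 | ⟨e2, _⟩
      · exact atomTrans a b c h1 h2
      · exact e2 ▸ h1
  | .cons a _, .single b, .single c, h1, h2 => by
      simp only [wordLexLt] at *; exact atomTrans a b c h1 h2
  | .cons a _, .single b, .cons c _, h1, h2 => by
      simp only [wordLexLt] at *; exact Or.inl (atomTrans a b c h1 h2)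
  | .cons a _, .cons b _, .single c, h1, h2 => by
      simp only [wordLexLt] at *
      rcases h1 with h1 | ⟨e1, _⟩
      · exact atomTrans a b c h1 h2
      · exact e1 ▸ h2
  | .cons a u, .cons b v, .cons c w, h1, h2 => by
      simp only [wordLexLt] at *
      rcases h1 with h1 | ⟨e1, l1⟩ <;> rcases h2 with h2 | ⟨e2, l2⟩
      · exact Or.inl (atomTrans a b c h1 h2)
      · exact Or.inl (e2 ▸ h1)
      · exact Or.inl (e1 ▸ h2)
      · exact Or.inr ⟨e1.trans e2, wordLexTrans u v w l1 l2⟩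
end

mutual
theorem atomTrich : ∀ (a b : OpAtom Z), atomDlexLt a b ∨ a = b ∨ atomDlexLt b a
  | .letter x, .letter y => by
      rcases lt_trichotomy x y with h | h | h
      · exact Or.inl (by simpa [atomDlexLt] using h)
      · exact Or.inr (Or.inl (by rw [h]))
      · exact Or.inr (Or.inr (by simpa [atomDlexLt] using h))
  | .letter _, .brD _ => Or.inl (by simp [atomDlexLt])
  | .letter _, .brP _ => Or.inl (by simp [atomDlexLt])
  | .brD _, .letter _ => Or.inr (Or.inr (by simp [atomDlexLt]))
  | .brD _, .brP _ => Or.inl (by simp [atomDlexLt])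
  | .brP _, .letter _ => Or.inr (Or.inr (by simp [atomDlexLt]))
  | .brP _, .brD _ => Or.inr (Or.inr (by simp [atomDlexLt]))
  | .brD u, .brD v => by
      rcases Nat.lt_trichotomy (OpWord.breadth u) (OpWord.breadth v) with h | h | h
      · exact Or.inl (by simp only [atomDlexLt]; exact Or.inl h)
      · rcases wordTrich u v h with hl | he | hl
        · exact Or.inl (by simp only [atomDlexLt]; exact Or.inr ⟨h, hl⟩)
        · exact Or.inr (Or.inl (by rw [he]))
        · exact Or.inr (Or.inr (by simp only [atomDlexLt]; exact Or.inr ⟨h.symm, hl⟩))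
      · exact Or.inr (Or.inr (by simp only [atomDlexLt]; exact Or.inl h))
  | .brP u, .brP v => by
      rcases Nat.lt_trichotomy (OpWord.breadth u) (OpWord.breadth v) with h | h | h
      · exact Or.inl (by simp only [atomDlexLt]; exact Or.inl h)
      · rcases wordTrich u v h with hl | he | hl
        · exact Or.inl (by simp only [atomDlexLt]; exact Or.inr ⟨h, hl⟩)
        · exact Or.inr (Or.inl (by rw [he]))
        · exact Or.inr (Or.inr (by simp only [atomDlexLt]; exact Or.inr ⟨h.symm, hl⟩))
      · exact Or.inr (Or.inr (by simp only [atomDlexLt]; exact Or.inl h))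

theorem wordTrich : ∀ (u v : OpWord Z), OpWord.breadth u = OpWord.breadth v →
    (wordLexLt u v ∨ u = v ∨ wordLexLt v u)
  | .single a, .single b, _ => by
      rcases atomTrich a b with h | h | h
      · exact Or.inl (by simpa [wordLexLt] using h)
      · exact Or.inr (Or.inl (by rw [h]))
      · exact Or.inr (Or.inr (by simpa [wordLexLt] using h))
  | .single a, .cons b v, h => by
      exfalso; have := breadth_pos' v; simp [OpWord.breadth] at h; omega
  | .cons a u, .single b, h => by
      exfalso; have := breadth_pos' u; simp [OpWord.breadth] at h; omega
  | .cons a u, .cons b v, h => by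
      have h' : OpWord.breadth u = OpWord.breadth v := by
        simp only [OpWord.breadth] at h; omega
      rcases atomTrich a b with hab | hab | hab
      · exact Or.inl (by simp only [wordLexLt]; exact Or.inl hab)
      · subst hab
        rcases wordTrich u v h' with h1 | h1 | h1
        · exact Or.inl (by simp only [wordLexLt]; exact Or.inr ⟨by trivial, h1⟩)
        · exact Or.inr (Or.inl (by rw [h1]))
        · exact Or.inr (Or.inr (by simp only [wordLexLt]; exact Or.inr ⟨by trivial, h1⟩))
      · exact Or.inr (Or.inr (by simp only [wordLexLt]; exact Or.inl hab))
end

mutual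
theorem atomIrrefl : ∀ (a : OpAtom Z), ¬ atomDlexLt a a
  | .letter x => by simp [atomDlexLt]
  | .brD u => by
      intro h; simp only [atomDlexLt] at h
      rcases h with h | ⟨_, h⟩
      · exact lt_irrefl _ h
      · exact wordIrrefl u h
  | .brP u => by
      intro h; simp only [atomDlexLt] at h
      rcases h with h | ⟨_, h⟩
      · exact lt_irrefl _ h
      · exact wordIrrefl u h

theorem wordIrrefl : ∀ (u : OpWord Z), ¬ wordLexLt u u
  | .single a => fun h => atomIrrefl a (by simpa [wordLexLt] using h)
  | .cons a u => by
      intro h; simp only [wordLexLt] at h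
      rcases h with h | ⟨_, h⟩
      · exact atomIrrefl a h
      · exact wordIrrefl u h
end


/-! dlexLt basic order properties -/

theorem dlexLt_trans : ∀ (u v w : OpWord Z), dlexLt u v → dlexLt v w → dlexLt u w := by
  intro u v w h1 h2
  rcases h1 with h1 | ⟨e1, l1⟩ <;> rcases h2 with h2 | ⟨e2, l2⟩
  · exact Or.inl (h1.trans h2)
  · exact Or.inl (e2 ▸ h1)
  · exact Or.inl (e1 ▸ h2)
  · exact Or.inr ⟨e1.trans e2, wordLexTrans u v w l1 l2⟩

theorem dlexLt_trich : ∀ (u v : OpWord Z), dlexLt u v ∨ u = v ∨ dlexLt v u := by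
  intro u v
  rcases Nat.lt_trichotomy (OpWord.breadth u) (OpWord.breadth v) with h | h | h
  · exact Or.inl (Or.inl h)
  · rcases wordTrich u v h with h1 | h1 | h1
    · exact Or.inl (Or.inr ⟨h, h1⟩)
    · exact Or.inr (Or.inl h1)
    · exact Or.inr (Or.inr (Or.inr ⟨h.symm, h1⟩))
  · exact Or.inr (Or.inr (Or.inl h))

theorem dlexLt_irrefl : ∀ (u : OpWord Z), ¬ dlexLt u u := by
  rintro u (h | ⟨_, h⟩)
  · exact lt_irrefl _ h
  · exact wordIrrefl u h

end Ord

/-! ## lexicographic nat-then-relation combinator -/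

section NatThen
variable {X : Type*}

def natThen (d : X → ℕ) (r : X → X → Prop) (u v : X) : Prop :=
  d u < d v ∨ (d u = d v ∧ r u v)

theorem natThen_trans {d : X → ℕ} {r : X → X → Prop}
    (hr : ∀ a b c, r a b → r b c → r a c) :
    ∀ a b c, natThen d r a b → natThen d r b c → natThen d r a c := by
  intro a b c h1 h2
  rcases h1 with h1 | ⟨e1, l1⟩ <;> rcases h2 with h2 | ⟨e2, l2⟩
  · exact Or.inl (h1.trans h2)
  · exact Or.inl (e2 ▸ h1)
  · exact Or.inl (e1 ▸ h2)
  · exact Or.inr ⟨e1.trans e2, hr a b c l1 l2⟩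

theorem natThen_trich {d : X → ℕ} {r : X → X → Prop}
    (hr : ∀ a b, r a b ∨ a = b ∨ r b a) :
    ∀ a b, natThen d r a b ∨ a = b ∨ natThen d r b a := by
  intro a b
  rcases Nat.lt_trichotomy (d a) (d b) with h | h | h
  · exact Or.inl (Or.inl h)
  · rcases hr a b with h1 | h1 | h1
    · exact Or.inl (Or.inr ⟨h, h1⟩)
    · exact Or.inr (Or.inl h1)
    · exact Or.inr (Or.inr (Or.inr ⟨h.symm, h1⟩))
  · exact Or.inr (Or.inr (Or.inl h))

theorem natThen_irrefl {d : X → ℕ} {r : X → X → Prop}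
    (hr : ∀ a, ¬ r a a) : ∀ a, ¬ natThen d r a a := by
  rintro a (h | ⟨_, h⟩)
  · exact lt_irrefl _ h
  · exact hr a h

/-! stabilization of descending chains -/

theorem accStab {r : X → X → Prop} :
    ∀ x : X, Acc r x → ∀ f : ℕ → X, f 0 = x →
      (∀ n, r (f (n + 1)) (f n) ∨ f (n + 1) = f n) →
      ∃ N, ∀ n, N ≤ n → f n = f N := by
  intro x hx
  induction hx with
  | intro x _ ih =>
    intro f h0 hstep
    by_cases hc : ∀ n, f n = f 0
    · exact ⟨0, fun n _ => (hc n)⟩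
    · push_neg at hc
      obtain ⟨m, hm⟩ := hc
      have hex : ∃ m, f m ≠ f 0 := ⟨m, hm⟩
      classical
      set m0 := Nat.find hex with hm0
      have hm0ne : f m0 ≠ f 0 := Nat.find_spec hex
      have hm0pos : 1 ≤ m0 := by
        rcases Nat.eq_zero_or_pos m0 with h | h
        · exact absurd (h ▸ rfl) hm0ne
        · exact h
      have hprev : f (m0 - 1) = f 0 := by
        by_contra hne
        have hle : m0 ≤ m0 - 1 := hm0 ▸ Nat.find_le hne
        omega
      have hstep' : r (f m0) (f (m0 - 1)) ∨ f m0 = f (m0 - 1) := by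
        have := hstep (m0 - 1)
        rwa [Nat.sub_add_cancel hm0pos] at this
      have hr : r (f m0) x := by
        rcases hstep' with h | h
        · rw [hprev, h0] at h; exact h
        · exact absurd (h.trans hprev) hm0ne
      obtain ⟨N', hN'⟩ := ih (f m0) hr (fun n => f (m0 + n)) rfl
        (fun n => hstep (m0 + n))
      refine ⟨m0 + N', fun n hn => ?_⟩
      have h1 : f n = f (m0 + (n - m0)) := by congr 1; omega
      rw [h1, hN' (n - m0) (by omega)]

theorem natStab (g : ℕ → ℕ) (hg : ∀ n, g (n + 1) ≤ g n) :
    ∃ N, ∀ n, N ≤ n → g n = g N :=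
  accStab (g 0) ((Nat.lt_wfRel.wf).apply (g 0)) g rfl (fun n => (hg n).lt_or_eq)

theorem natThen_stab (d : X → ℕ) (r : X → X → Prop)
    (hr : ∀ f : ℕ → X, (∀ n, r (f (n + 1)) (f n) ∨ f (n + 1) = f n) →
      ∃ N, ∀ n, N ≤ n → f n = f N) :
    ∀ f : ℕ → X, (∀ n, natThen d r (f (n + 1)) (f n) ∨ f (n + 1) = f n) →
      ∃ N, ∀ n, N ≤ n → f n = f N := by
  intro f hf
  have hmono : ∀ n, d (f (n + 1)) ≤ d (f n) := by
    intro n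
    rcases hf n with (h | ⟨e, _⟩) | h
    · exact le_of_lt h
    · exact le_of_eq e
    · exact le_of_eq (by rw [h])
  obtain ⟨N1, h1⟩ := natStab (fun n => d (f n)) hmono
  obtain ⟨N2, h2⟩ := hr (fun n => f (N1 + n)) (by
    intro n
    rcases hf (N1 + n) with (h | ⟨_, hrr⟩) | h
    · exfalso
      have e1 : d (f (N1 + n + 1)) = d (f N1) := h1 _ (by omega)
      have e2 : d (f (N1 + n)) = d (f N1) := h1 _ (by omega)
      omega
    · exact Or.inl hrr
    · exact Or.inr h)
  refine ⟨N1 + N2, fun n hn => ?_⟩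
  have h3 : f n = f (N1 + (n - N1)) := by congr 1; omega
  rw [h3, h2 (n - N1) (by omega)]

end NatThen
section Size
variable {Z : Type u}



/-- total size of a word: all nodes counted. -/
def wsize (w : OpWord Z) : ℕ := wordDegD w + wordDegP w + wordDegZ w
def asize (a : OpAtom Z) : ℕ := atomDegD a + atomDegP a + atomDegZ a

lemma asize_letter (z : Z) : asize (OpAtom.letter z) = 1 := by
  simp [asize, atomDegD, atomDegP, atomDegZ]

lemma asize_brD (u : OpWord Z) : asize (OpAtom.brD u) = wsize u + 1 := by
  simp only [asize, wsize, atomDegD, atomDegP, atomDegZ]; omega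

lemma asize_brP (u : OpWord Z) : asize (OpAtom.brP u) = wsize u + 1 := by
  simp only [asize, wsize, atomDegD, atomDegP, atomDegZ]; omega

lemma wsize_single (a : OpAtom Z) : wsize (OpWord.single a) = asize a := by
  simp only [asize, wsize, wordDegD, wordDegP, wordDegZ]

lemma wsize_cons (a : OpAtom Z) (w : OpWord Z) :
    wsize (OpWord.cons a w) = asize a + wsize w := by
  simp only [asize, wsize, wordDegD, wordDegP, wordDegZ]; omega

lemma asize_pos (a : OpAtom Z) : 1 ≤ asize a := by
  cases a with
  | letter z => simp [asize_letter]
  | brD u => simp [asize_brD]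
  | brP u => simp [asize_brP]

lemma breadth_pos (w : OpWord Z) : 1 ≤ OpWord.breadth w := by
  cases w <;> simp [OpWord.breadth]

lemma breadth_single (a : OpAtom Z) : OpWord.breadth (OpWord.single a) = 1 := rfl
lemma breadth_cons (a : OpAtom Z) (w : OpWord Z) :
    OpWord.breadth (OpWord.cons a w) = 1 + OpWord.breadth w := rfl


end Size

/-! ## well-foundedness of dlexLt on words of bounded size -/

section AccDev
variable {Z : Type u} [LinearOrder Z] [WellFoundedLT Z]

def RaN (N : ℕ) (a b : OpAtom Z) : Prop := atomDlexLt a b ∧ asize a ≤ N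
def RwN (N : ℕ) (u v : OpWord Z) : Prop := dlexLt u v ∧ wsize u ≤ N

lemma accLetterN (N : ℕ) (z : Z) : Acc (RaN (Z := Z) N) (OpAtom.letter z) := by
  have h : ∀ z : Z, Acc (· < ·) z → Acc (RaN (Z := Z) N) (OpAtom.letter z) := by
    intro z hz
    induction hz with
    | intro z _ ih =>
      constructor
      rintro b ⟨hb, _⟩
      cases b with
      | letter y => exact ih y (by simpa [atomDlexLt] using hb)
      | brD u => simp [atomDlexLt] at hb
      | brP u => simp [atomDlexLt] at hb
  exact h z (IsWellFounded.wf.apply z)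

lemma accBrD (N : ℕ) : ∀ u : OpWord Z, Acc (RwN N) u → Acc (RaN (N + 1)) (OpAtom.brD u) := by
  intro u hu
  induction hu with
  | intro u _ ih =>
    constructor
    rintro b ⟨hb, hsz⟩
    cases b with
    | letter z => exact accLetterN _ z
    | brD u' =>
      refine ih u' ⟨?_, ?_⟩
      · simpa [atomDlexLt, dlexLt] using hb
      · rw [asize_brD] at hsz; omega
    | brP u' => simp [atomDlexLt] at hb

lemma accBrP (N : ℕ) (hall : ∀ v : OpWord Z, wsize v ≤ N → Acc (RwN N) v) :
    ∀ u : OpWord Z, Acc (RwN N) u → Acc (RaN (N + 1)) (OpAtom.brP u) := by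
  intro u hu
  induction hu with
  | intro u _ ih =>
    constructor
    rintro b ⟨hb, hsz⟩
    cases b with
    | letter z => exact accLetterN _ z
    | brD v =>
      rw [asize_brD] at hsz
      exact accBrD N v (hall v (by omega))
    | brP u' =>
      refine ih u' ⟨?_, ?_⟩
      · simpa [atomDlexLt, dlexLt] using hb
      · rw [asize_brP] at hsz; omega

lemma accSingle (N : ℕ) (a : OpAtom Z) (ha : Acc (RaN N) a) :
    Acc (RwN N) (OpWord.single a) := by
  induction ha with
  | intro a _ ih =>
    constructor
    rintro u ⟨hlt, hsz⟩
    rcases hlt with hlt | ⟨hbe, hlex⟩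
    · exact absurd hlt (by have := breadth_pos u; rw [breadth_single]; omega)
    · cases u with
      | single a' =>
        refine ih a' ⟨by simpa [wordLexLt] using hlex, by rwa [wsize_single] at hsz⟩
      | cons a' u' =>
        exfalso
        rw [breadth_cons, breadth_single] at hbe
        have := breadth_pos u'; omega

lemma accConsAux (N B : ℕ)
    (hlow : ∀ u : OpWord Z, wsize u ≤ N → OpWord.breadth u + 1 ≤ B → Acc (RwN N) u) :
    ∀ a : OpAtom Z, Acc (RaN N) a → ∀ w' : OpWord Z, Acc (RwN N) w' →
      asize a + wsize w' ≤ N → OpWord.breadth (OpWord.cons a w') = B →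
      Acc (RwN N) (OpWord.cons a w') := by
  intro a ha
  induction ha with
  | intro a _ iha =>
    intro w' hw'
    induction hw' with
    | intro w' _ ihw' =>
      intro hsz hB
      constructor
      rintro u ⟨hlt, hszu⟩
      rcases hlt with hlt | ⟨hbe, hlex⟩
      · exact hlow u hszu (by omega)
      · cases u with
        | single a'' =>
          exfalso
          rw [breadth_single, breadth_cons] at hbe
          have := breadth_pos w'; omega
        | cons a' u' =>
          have hbu : OpWord.breadth u' = OpWord.breadth w' := by
            rw [breadth_cons, breadth_cons] at hbe; omega
          have hszu' : asize a' + wsize u' ≤ N := by rwa [wsize_cons] at hszu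
          rcases (by simpa [wordLexLt] using hlex :
              atomDlexLt a' a ∨ a' = a ∧ wordLexLt u' w') with h | ⟨he, hl⟩
          · refine iha a' ⟨h, by omega⟩ u'
              (hlow u' (by omega) (by rw [breadth_cons] at hB; omega))
              (by omega) (by rw [breadth_cons, hbu, ← breadth_cons]; exact hB)
          · subst he
            exact ihw' u' ⟨Or.inr ⟨hbu, hl⟩, by omega⟩ (by omega)
              (by rw [breadth_cons, hbu, ← breadth_cons]; exact hB)

theorem accMain : ∀ (N : ℕ) (w : OpWord Z), wsize w ≤ N → Acc (RwN N) w := by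
  intro N
  induction N using Nat.strong_induction_on with
  | _ N IH =>
    have HA : ∀ a : OpAtom Z, asize a ≤ N → Acc (RaN N) a := by
      intro a ha
      cases a with
      | letter z => exact accLetterN N z
      | brD u =>
        rw [asize_brD] at ha
        have h1 : Acc (RwN (N - 1)) u := IH (N - 1) (by omega) u (by omega)
        have h2 := accBrD (N - 1) u h1
        rwa [Nat.sub_add_cancel (by omega)] at h2
      | brP u =>
        rw [asize_brP] at ha
        have hall : ∀ v : OpWord Z, wsize v ≤ N - 1 → Acc (RwN (N - 1)) v :=
          fun v hv => IH (N - 1) (by omega) v hv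
        have h1 : Acc (RwN (N - 1)) u := IH (N - 1) (by omega) u (by omega)
        have h2 := accBrP (N - 1) hall u h1
        rwa [Nat.sub_add_cancel (by omega)] at h2
    have HW : ∀ (b : ℕ) (w : OpWord Z), wsize w ≤ N → OpWord.breadth w ≤ b →
        Acc (RwN N) w := by
      intro b
      induction b with
      | zero => intro w _ hb; exact absurd hb (by have := breadth_pos w; omega)
      | succ b IHb =>
        intro w hw hb
        rcases Nat.lt_or_ge (OpWord.breadth w) (b + 1) with h | h
        · exact IHb w hw (by omega)
        · have hbw : OpWord.breadth w = b + 1 := by omega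
          cases w with
          | single a =>
            exact accSingle N a (HA a (by rwa [wsize_single] at hw))
          | cons a w' =>
            have hsz : asize a + wsize w' ≤ N := by rwa [wsize_cons] at hw
            refine accConsAux N (b + 1)
              (fun u hu hub => IHb u hu (by omega)) a
              (HA a (by omega)) w'
              (IHb w' (by omega) (by rw [breadth_cons] at hbw; omega))
              hsz hbw
    intro w hw
    exact HW (OpWord.breadth w) w hw le_rfl

end AccDev

/-! ## assembling the proof for ≤_PD -/

section Final
variable {Z : Type u} [LinearOrder Z] [WellFoundedLT Z]

def tower : OpWord Z → OpWord Z → Prop :=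
  natThen wordDegD (natThen wordDegP (natThen wordDegZ
    (natThen wordDegGD (natThen wordDegGP dlexLt))))

lemma pdLt_iff_tower (u v : OpWord Z) : pdLt u v ↔ tower u v := Iff.rfl

theorem pdLt_trans' : ∀ u v w : OpWord Z, pdLt u v → pdLt v w → pdLt u w :=
  natThen_trans (natThen_trans (natThen_trans (natThen_trans
    (natThen_trans dlexLt_trans))))

theorem pdLt_trich : ∀ u v : OpWord Z, pdLt u v ∨ u = v ∨ pdLt v u :=
  natThen_trich (natThen_trich (natThen_trich (natThen_trich
    (natThen_trich dlexLt_trich))))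

theorem pdLt_irrefl' : ∀ u : OpWord Z, ¬ pdLt u u :=
  natThen_irrefl (natThen_irrefl (natThen_irrefl (natThen_irrefl
    (natThen_irrefl dlexLt_irrefl))))

def r5 (u v : OpWord Z) : Prop := dlexLt u v ∧ wsize u = wsize v

lemma pdLt_towerS (u v : OpWord Z) : pdLt u v →
    natThen wordDegD (natThen wordDegP (natThen wordDegZ
      (natThen wordDegGD (natThen wordDegGP r5)))) u v := by
  intro h
  simp only [pdLt, natThen] at h ⊢
  rcases h with h | ⟨e1, h | ⟨e2, h | ⟨e3, h | ⟨e4, h | ⟨e5, h⟩⟩⟩⟩⟩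
  · exact Or.inl h
  · exact Or.inr ⟨e1, Or.inl h⟩
  · exact Or.inr ⟨e1, Or.inr ⟨e2, Or.inl h⟩⟩
  · exact Or.inr ⟨e1, Or.inr ⟨e2, Or.inr ⟨e3, Or.inl h⟩⟩⟩
  · exact Or.inr ⟨e1, Or.inr ⟨e2, Or.inr ⟨e3, Or.inr ⟨e4, Or.inl h⟩⟩⟩⟩
  · exact Or.inr ⟨e1, Or.inr ⟨e2, Or.inr ⟨e3, Or.inr ⟨e4, Or.inr
      ⟨e5, h, by simp only [r5, wsize]; omega⟩⟩⟩⟩⟩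

lemma r5Stab : ∀ f : ℕ → OpWord Z,
    (∀ n, r5 (f (n + 1)) (f n) ∨ f (n + 1) = f n) →
    ∃ N, ∀ n, N ≤ n → f n = f N := by
  intro f hf
  have hsz : ∀ n, wsize (f n) = wsize (f 0) := by
    intro n
    induction n with
    | zero => rfl
    | succ n ihn =>
      rcases hf n with ⟨_, h⟩ | h
      · rw [h, ihn]
      · rw [h, ihn]
  apply accStab (f 0) (accMain (wsize (f 0)) (f 0) le_rfl) f rfl
  intro n
  rcases hf n with ⟨h1, _⟩ | h
  · exact Or.inl ⟨h1, le_of_eq (hsz (n + 1))⟩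
  · exact Or.inr h

theorem pdStab : ∀ f : ℕ → OpWord Z,
    (∀ n, pdLe (f (n + 1)) (f n)) → ∃ N, ∀ n, N ≤ n → f n = f N := by
  intro f hf
  refine natThen_stab wordDegD _ (natThen_stab wordDegP _ (natThen_stab wordDegZ _
    (natThen_stab wordDegGD _ (natThen_stab wordDegGP r5 r5Stab)))) f ?_
  intro n
  rcases hf n with h | h
  · exact Or.inl (pdLt_towerS _ _ h)
  · exact Or.inr h

end Final

theorem pdLe_isLinWellOrder' (Z : Type u) [LinearOrder Z] [WellFoundedLT Z] :
    IsLinWellOrder (pdLe (Z := Z)) := by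
  constructor
  · refine ⟨fun x => Or.inr rfl, ?_, ?_, ?_⟩
    · rintro x y z (h1 | rfl) (h2 | rfl)
      · exact Or.inl (pdLt_trans' x y z h1 h2)
      · exact Or.inl h1
      · exact Or.inl h2
      · exact Or.inr rfl
    · rintro x y (h1 | rfl) (h2 | h2)
      · exact absurd (pdLt_trans' x y x h1 h2) (pdLt_irrefl' x)
      · exact h2.symm
      · rfl
      · rfl
    · intro x y
      rcases pdLt_trich x y with h | h | h
      · exact Or.inl (Or.inl h)
      · exact Or.inl (Or.inr h)
      · exact Or.inr (Or.inl h)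
  · exact pdStab

/-- For any set `Z` equipped with a well order, the order `≤_PD` is a
well order on the free Ω-operated semigroup 𝔖(Z). -/
theorem pdLe_isLinWellOrder (Z : Type u) [LinearOrder Z] [WellFoundedLT Z] :
    IsLinWellOrder (pdLe (Z := Z)) :=
  pdLe_isLinWellOrder' Z
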